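/- Let 𝔤 be a finite-dimensional real simple Lie algebra of dimension n whose Killing form B is negative definite, and let g₀ := −B, an inner product on 𝔤. Let g be an inner product on 𝔤 with g ≠ g₀, let {X₁,…,X_n} be a g₀-orthonormal basis and {Y₁,…,Y_n} a g-orthonormal basis of 𝔤, write Y_j = ∑_i a_{ij} X_i, and assume |det(a_{ij})| ≥ 1 (this expresses vol(g) ≤ vol(g₀)). Set C := (∑_{i,j} a_{ij}²)/n. Then C > 1, and for every finite-dimensional real inner product space V and every nonzero Lie algebra homomorphism φ : 𝔤 → End(V) with all φ(X) skew-adjoint, one has −∑_{j=1}^n Tr(φ(Y_j) ∘ φ(Y_j)) = C · (−∑_{i=1}^n Tr(φ(X_i) ∘ φ(X_i))). In particular the constant C > 1 depends only on g and not on (V, φ). -/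

import Mathlib

open scoped RealInnerProductSpace

attribute [local instance 100] LieRing.ofAssociativeRing

open Matrix in

/-- Algebraic content of Proposition 3.1: let `𝔤` be a real simple Lie algebra with
negative-definite Killing form `B`, `g₀ = −B`, and `g ≠ g₀` another inner product on `𝔤`.
Let `{Xᵢ}` be a `g₀`-orthonormal basis, `{Yⱼ}` a `g`-orthonormal basis, `Yⱼ = ∑ᵢ aᵢⱼ Xᵢ`,
and assume `|det A| ≥ 1` (i.e. `vol(g) ≤ vol(g₀)`). Set `C = ‖A‖²/n`. Then `C > 1` and
for every nonzero skew-adjoint representation `φ` of `𝔤` on a finite-dimensional real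
inner product space `V`, `−∑ⱼ Tr(φ(Yⱼ)²) = C · (−∑ᵢ Tr(φ(Xᵢ)²))`. -/
theorem trace_laplacian_ratio_const_of_simple
    (L : Type*) [LieRing L] [LieAlgebra ℝ L] [FiniteDimensional ℝ L]
    [LieAlgebra.IsSimple ℝ L]
    (hB : ∀ x : L, x ≠ 0 → killingForm ℝ L x x < 0)
    (g : LinearMap.BilinForm ℝ L)
    (hgsymm : ∀ x y, g x y = g y x) (hgpos : ∀ x : L, x ≠ 0 → 0 < g x x)
    (hgne : g ≠ -(killingForm ℝ L))
    (n : ℕ) (X Y : Module.Basis (Fin n) ℝ L)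
    (hX : ∀ i j, -(killingForm ℝ L (X i) (X j)) = if i = j then 1 else 0)
    (hY : ∀ i j, g (Y i) (Y j) = if i = j then 1 else 0)
    (A : Matrix (Fin n) (Fin n) ℝ)
    (hA : ∀ j, Y j = ∑ i, A i j • X i)
    (hdet : 1 ≤ |A.det|)
    (C : ℝ) (hC : C = (∑ i, ∑ j, (A i j) ^ 2) / n) :
    1 < C ∧
      ∀ (V : Type) [NormedAddCommGroup V] [InnerProductSpace ℝ V] [FiniteDimensional ℝ V]
        (φ : L →ₗ⁅ℝ⁆ Module.End ℝ V), φ ≠ 0 →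
        (∀ (Z : L) (v w : V), ⟪φ Z v, w⟫ = -⟪v, φ Z w⟫) →
        -(∑ j, LinearMap.trace ℝ V ((φ (Y j)) ∘ₗ (φ (Y j)))) =
          C * (-(∑ i, LinearMap.trace ℝ V ((φ (X i)) ∘ₗ (φ (X i))))) := by
  -- basic facts
  have hnon : ¬IsLieAbelian L := LieAlgebra.IsSimple.non_abelian ℝ
  have hNontriv : Nontrivial L := by
    by_contra h
    rw [not_nontrivial_iff_subsingleton] at h
    exact hnon ⟨fun x m => Subsingleton.elim _ _⟩
  have hn0 : 0 < n := by
    have : Nonempty (Fin n) := X.index_nonempty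
    exact Fin.pos_iff_nonempty.mpr this
  have hnR : (0:ℝ) < n := by exact_mod_cast hn0
  have hX2 : ∀ i k, killingForm ℝ L (X i) (X k) = if i = k then (-1:ℝ) else 0 := by
    intro i k
    have := hX i k
    split_ifs at this ⊢ <;> linarith
  have hnd : ∀ w : L, (∀ x : L, killingForm ℝ L w x = 0) → w = 0 := by
    intro w hw
    by_contra h
    exact absurd (hw w) (ne_of_lt (hB w h))
  -- expansion of the Killing form on the Y basis
  have hBYY : ∀ i j, killingForm ℝ L (Y i) (Y j) = -(∑ k, A k i * A k j) := by
    intro i j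
    rw [hA i, hA j]
    simp only [map_sum, _root_.map_smul, LinearMap.sum_apply, LinearMap.smul_apply, smul_eq_mul, hX2,
      mul_ite, mul_neg_one, mul_zero, Finset.sum_ite_eq, Finset.sum_ite_eq', Finset.mem_univ,
      if_true, mul_neg]
    rw [← Finset.sum_neg_distrib]
    exact Finset.sum_congr rfl fun k _ => by ring
  -- Part 1 : C > 1
  have hC1 : 1 < C := by
    have hMh : ((Aᴴ * A : Matrix (Fin n) (Fin n) ℝ)).IsHermitian :=
      Matrix.isHermitian_conjTranspose_mul_self A
    have hev0 : ∀ i, 0 ≤ hMh.eigenvalues i :=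
      (Matrix.posSemidef_conjTranspose_mul_self A).eigenvalues_nonneg
    have hprod : ∏ i, hMh.eigenvalues i = (Aᴴ * A).det := by
      simpa using hMh.det_eq_prod_eigenvalues.symm
    have hprod1 : (1:ℝ) ≤ ∏ i, hMh.eigenvalues i := by
      rw [hprod, Matrix.det_mul, Matrix.det_conjTranspose, star_trivial]
      nlinarith [abs_nonneg A.det, sq_abs A.det]
    have htr : (Aᴴ * A).trace = ∑ i, hMh.eigenvalues i := by
      nth_rewrite 1 [hMh.spectral_theorem]
      rw [Unitary.conjStarAlgAut_apply, Matrix.trace_mul_comm, ← mul_assoc,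
        Matrix.mem_unitaryGroup_iff'.mp (hMh.eigenvectorUnitary).2, one_mul,
        Matrix.trace_diagonal]
      simp
    have htrS : (Aᴴ * A).trace = ∑ i, ∑ j, (A i j)^2 := by
      simp only [Matrix.trace, Matrix.diag, Matrix.mul_apply, Matrix.conjTranspose_apply,
        star_trivial, sq]
      rw [Finset.sum_comm]
    by_cases hall : ∀ i, hMh.eigenvalues i = 1
    · exfalso
      apply hgne
      have hM1 : (Aᴴ * A) = (1 : Matrix (Fin n) (Fin n) ℝ) := by
        have hd : Matrix.diagonal (RCLike.ofReal ∘ hMh.eigenvalues)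
            = (1 : Matrix (Fin n) (Fin n) ℝ) := by
          ext i j
          simp only [Matrix.diagonal_apply, Matrix.one_apply, Function.comp_apply, hall,
            RCLike.ofReal_one]
        have hsp := hMh.spectral_theorem
        rw [hd, map_one] at hsp
        exact hsp
      have hAA : ∀ i j, (∑ k, A k i * A k j) = if i = j then (1:ℝ) else 0 := by
        intro i j
        have := congrFun (congrFun hM1 i) j
        simpa [Matrix.mul_apply, Matrix.conjTranspose_apply, Matrix.one_apply] using this
      refine Module.Basis.ext Y fun i => Module.Basis.ext Y fun j => ?_
      rw [hY i j, LinearMap.neg_apply, LinearMap.neg_apply, hBYY, hAA, neg_neg]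
    · push_neg at hall
      obtain ⟨i₀, hi₀⟩ := hall
      have hpos : ∀ i, 0 < hMh.eigenvalues i := by
        intro i
        rcases lt_or_eq_of_le (hev0 i) with h | h
        · exact h
        · exfalso
          have h0 : ∏ j, hMh.eigenvalues j = 0 :=
            Finset.prod_eq_zero (Finset.mem_univ i) h.symm
          rw [h0] at hprod1; linarith
      have hsum : ∑ i, (Real.log (hMh.eigenvalues i) + 1) < ∑ i, hMh.eigenvalues i := by
        refine Finset.sum_lt_sum (fun i _ => ?_) ⟨i₀, Finset.mem_univ i₀, ?_⟩
        · have := Real.log_le_sub_one_of_pos (hpos i); linarith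
        · have := Real.log_lt_sub_one_of_pos (hpos i₀) hi₀; linarith
      have hlogs : 0 ≤ ∑ i, Real.log (hMh.eigenvalues i) := by
        rw [← Real.log_prod (fun i _ => (hpos i).ne')]
        exact Real.log_nonneg hprod1
      have hlt : (n:ℝ) < ∑ i, ∑ j, (A i j)^2 := by
        rw [← htrS, htr]
        have h1 : ∑ i, (Real.log (hMh.eigenvalues i) + 1)
            = (∑ i, Real.log (hMh.eigenvalues i)) + n := by
          rw [Finset.sum_add_distrib]; simp
        linarith
      rw [hC, lt_div_iff₀ hnR, one_mul]
      exact hlt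
  refine ⟨hC1, ?_⟩
  -- Part 2 : representations
  intro V _ _ _ φ hφ hskew
  letI : LieRingModule L V := LieRingModule.compLieHom V φ
  letI : LieModule ℝ L V := LieModule.compLieHom V φ
  have hFapp : ∀ Z W : L, LieModule.traceForm ℝ L V Z W = LinearMap.trace ℝ V (φ Z ∘ₗ φ W) := by
    intro Z W
    rfl
  set F : LinearMap.BilinForm ℝ L := LieModule.traceForm ℝ L V with hF
  have hFsymm : ∀ z w : L, F z w = F w z := fun z w => LieModule.traceForm_comm ℝ L V z w
  have hFinv : ∀ u y z : L, F ⁅u, y⁆ z = -F y ⁅u, z⁆ := fun u y z =>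
    LieModule.traceForm_apply_lie_apply' ℝ L V u y z
  have hBinv : ∀ u y z : L, killingForm ℝ L ⁅u, y⁆ z = -killingForm ℝ L y ⁅u, z⁆ := fun u y z =>
    LieModule.traceForm_apply_lie_apply' ℝ L L u y z
  -- the operator `T` representing `F` against the Killing form
  set T : L →ₗ[ℝ] L := ∑ i, (F.flip (X i)).smulRight (X i) with hT
  have hTapp : ∀ Z, T Z = ∑ i, F Z (X i) • X i := by
    intro Z
    rw [hT]
    simp [LinearMap.sum_apply, LinearMap.smulRight_apply, LinearMap.flip_apply]
  have hBT : ∀ Z x, killingForm ℝ L (T Z) x = -F Z x := by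
    intro Z x
    have h : (killingForm ℝ L (T Z) : L →ₗ[ℝ] ℝ) = -(F Z) := by
      apply Module.Basis.ext X
      intro j
      rw [hTapp]
      simp only [map_sum, _root_.map_smul, LinearMap.sum_apply, LinearMap.smul_apply, smul_eq_mul,
        hX2, LinearMap.neg_apply, mul_ite, mul_neg_one, mul_zero, Finset.sum_ite_eq,
        Finset.sum_ite_eq', Finset.mem_univ, if_true]
    have := LinearMap.congr_fun h x
    simpa using this
  have hcomm : ∀ U z : L, T ⁅U, z⁆ = ⁅U, T z⁆ := by
    intro U z
    have key : ∀ x, killingForm ℝ L (T ⁅U, z⁆ - ⁅U, T z⁆) x = 0 := by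
      intro x
      rw [map_sub, LinearMap.sub_apply, hBT, hBinv, hBT, hFinv]
      ring
    have := hnd _ key
    rwa [sub_eq_zero] at this
  -- the symmetric matrix of `F` in the basis `X`
  set Smat : Matrix (Fin n) (Fin n) ℝ := Matrix.of (fun i j => F (X i) (X j)) with hSmat
  have hSh : Smat.IsHermitian := by
    ext i j
    simp only [Matrix.conjTranspose_apply, hSmat, Matrix.of_apply, star_trivial]
    exact hFsymm (X j) (X i)
  have i0 : Fin n := ⟨0, hn0⟩
  set μ : ℝ := hSh.eigenvalues i0 with hμ
  set v : Fin n → ℝ := ⇑(hSh.eigenvectorBasis i0) with hv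
  have hvec : Smat *ᵥ v = μ • v := hSh.mulVec_eigenvectorBasis i0
  have hvne : v ≠ 0 := by
    intro h
    exact hSh.eigenvectorBasis.orthonormal.ne_zero i0
      (by apply WithLp.ofLp_injective; exact funext fun k => congrFun h k)
  set x₀ : L := ∑ i, v i • X i with hx₀def
  have hx₀ : x₀ ≠ 0 := by
    intro h
    apply hvne
    rw [hx₀def] at h
    funext k
    exact Fintype.linearIndependent_iff.mp X.linearIndependent v h k
  have hTx₀ : T x₀ = μ • x₀ := by
    have hcoeff : ∀ k, ∑ i, v i * Smat i k = μ * v k := by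
      intro k
      have h1 := congrFun hvec k
      simp only [Matrix.mulVec, dotProduct, Pi.smul_apply, smul_eq_mul] at h1
      calc ∑ i, v i * Smat i k = ∑ i, Smat k i * v i := by
            refine Finset.sum_congr rfl fun i _ => ?_
            rw [mul_comm]
            congr 1
            exact hFsymm (X i) (X k)
        _ = μ * v k := h1
    rw [hx₀def, map_sum]
    simp only [_root_.map_smul]
    calc (∑ i, v i • T (X i)) = ∑ i, v i • (∑ k, F (X i) (X k) • X k) := by
          exact Finset.sum_congr rfl fun i _ => by rw [hTapp]
      _ = ∑ i, ∑ k, (v i * Smat i k) • X k := by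
          refine Finset.sum_congr rfl fun i _ => ?_
          rw [Finset.smul_sum]
          exact Finset.sum_congr rfl fun k _ => by rw [smul_smul]; rfl
      _ = ∑ k, ∑ i, (v i * Smat i k) • X k := Finset.sum_comm
      _ = ∑ k, (μ * v k) • X k := by
          refine Finset.sum_congr rfl fun k _ => ?_
          rw [← Finset.sum_smul, hcoeff k]
      _ = μ • ∑ i, v i • X i := by
          rw [Finset.smul_sum]
          exact Finset.sum_congr rfl fun k _ => by rw [smul_smul]
  -- the eigenspace of `T` is a nonzero ideal, hence everything; so `F = -μ · Killing`
  let I : LieIdeal ℝ L :=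
    { __ := LinearMap.ker (T - μ • (LinearMap.id : L →ₗ[ℝ] L))
      lie_mem := by
        intro x m hm
        have hm' : T m = μ • m := by
          have h0 : (T - μ • (LinearMap.id : L →ₗ[ℝ] L)) m = 0 := hm
          simp only [LinearMap.sub_apply, LinearMap.smul_apply, LinearMap.id_apply,
            sub_eq_zero] at h0
          exact h0
        show (T - μ • (LinearMap.id : L →ₗ[ℝ] L)) ⁅x, m⁆ = 0
        simp [LinearMap.sub_apply, hcomm x m, hm', lie_smul, sub_eq_zero] }
  have hx₀I : x₀ ∈ I := by
    show (T - μ • (LinearMap.id : L →ₗ[ℝ] L)) x₀ = 0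
    simp [LinearMap.sub_apply, hTx₀, sub_eq_zero]
  have hItop : I = ⊤ := by
    rcases LieAlgebra.IsSimple.eq_bot_or_eq_top I with h | h
    · exfalso
      rw [h] at hx₀I
      exact hx₀ (by simpa using hx₀I)
    · exact h
  have hTall : ∀ z : L, T z = μ • z := by
    intro z
    have hz : z ∈ I := by rw [hItop]; trivial
    have h0 : (T - μ • (LinearMap.id : L →ₗ[ℝ] L)) z = 0 := hz
    simp only [LinearMap.sub_apply, LinearMap.smul_apply, LinearMap.id_apply,
      sub_eq_zero] at h0
    exact h0
  have hFB : ∀ z w : L, F z w = -μ * killingForm ℝ L z w := by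
    intro z w
    have h := hBT z w
    rw [hTall z, _root_.map_smul, LinearMap.smul_apply, smul_eq_mul] at h
    linarith
  -- final computation
  have hXtr : ∀ i, LinearMap.trace ℝ V (φ (X i) ∘ₗ φ (X i)) = μ := by
    intro i
    rw [← hFapp, hFB, hX2]
    simp
  have hYtr : ∀ j, LinearMap.trace ℝ V (φ (Y j) ∘ₗ φ (Y j)) = μ * ∑ k, A k j ^ 2 := by
    intro j
    rw [← hFapp, hFB, hBYY]
    simp only [pow_two]
    ring
  have hsumY : ∑ j, LinearMap.trace ℝ V (φ (Y j) ∘ₗ φ (Y j)) = μ * ∑ i, ∑ j, A i j ^ 2 := by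
    simp only [hYtr]
    rw [← Finset.mul_sum, Finset.sum_comm]
  have hsumX : ∑ i, LinearMap.trace ℝ V (φ (X i) ∘ₗ φ (X i)) = n * μ := by
    simp [hXtr, Finset.sum_const, Finset.card_univ, nsmul_eq_mul]
  rw [hsumY, hsumX, hC]
  field_simp
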